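/- Let f, g : ℝ → ℝ be Borel measurable with f(x) ≤ x ≤ g(x) for all x, and let μ be a probability measure on ℝ with finite first moment such that ∫ 1_{g(x)>f(x)} · (g(x) − x)(x − f(x))/(g(x) − f(x)) dμ(x) < ∞. Define the kernel κ(x) = χ_{f(x),x,g(x)}, the measure ν(dy) = ∫ κ(x)(dy) dμ(x) (i.e. ν = μ bind κ), and π(dx,dy) = μ(dx) κ(x)(dy). Then ν is a probability measure with finite first moment, ∫ y dν(y) = ∫ x dμ(x), P_μ(k) ≤ P_ν(k) for all k ∈ ℝ, and π is a martingale coupling of μ and ν. -/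

import Mathlib

open MeasureTheory Set
open scoped ENNReal ProbabilityTheory

/-- The put price function `P_η(k) = ∫ (k-x)⁺ dη(x)`. -/
noncomputable def putPrice (η : Measure ℝ) (k : ℝ) : ℝ := ∫ x, max (k - x) 0 ∂η

/-- `π` is a martingale coupling of `μ` and `ν`. -/
def IsMartingaleCoupling (μ ν : Measure ℝ) (π : Measure (ℝ × ℝ)) : Prop :=
  IsProbabilityMeasure π ∧ π.map Prod.fst = μ ∧ π.map Prod.snd = ν ∧
    ∀ B : Set ℝ, MeasurableSet B →
      ∫ p in B ×ˢ (Set.univ : Set ℝ), p.2 ∂π = ∫ x in B, x ∂μ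

/-- The American-put payoff under coupling `π` and exercise set `B`. -/
noncomputable def amPayoff (K₁ K₂ : ℝ) (π : Measure (ℝ × ℝ)) (B : Set ℝ) : ℝ :=
  ∫ p, (B.indicator (fun x => max (K₁ - x) 0) p.1
      + Bᶜ.indicator (fun _ => max (K₂ - p.2) 0) p.1) ∂π

/-- For `c ≤ x ≤ d`, the two-point martingale law `χ_{c,x,d}`. -/
noncomputable def chi (c x d : ℝ) : Measure ℝ :=
  if c < x ∧ x < d then
    (ENNReal.ofReal ((d - x) / (d - c))) • Measure.dirac c
      + (ENNReal.ofReal ((x - c) / (d - c))) • Measure.dirac d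
  else Measure.dirac x

section AuxChi

lemma integrable_dirac_real (u : ℝ → ℝ) (a : ℝ) : Integrable u (Measure.dirac a) :=
  (integrable_congr (MeasureTheory.ae_eq_dirac u)).mpr (integrable_const _)

lemma integrable_smul_dirac (u : ℝ → ℝ) (a : ℝ) (r : ℝ≥0∞) (hr : r ≠ ∞) :
    Integrable u (r • Measure.dirac a) := by
  rcases eq_or_ne r 0 with h | h
  · simp [h]
  · exact (integrable_smul_measure h hr).mpr (integrable_dirac_real u a)

lemma integral_chi {c x d : ℝ} (u : ℝ → ℝ) :
    ∫ y, u y ∂(chi c x d) =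
      if c < x ∧ x < d then (d - x)/(d - c) * u c + (x - c)/(d - c) * u d else u x := by
  unfold chi
  split_ifs with h
  · have hdc : (0:ℝ) < d - c := by linarith [h.1, h.2]
    have ha : (0:ℝ) ≤ (d - x)/(d - c) := div_nonneg (by linarith [h.2]) hdc.le
    have hb : (0:ℝ) ≤ (x - c)/(d - c) := div_nonneg (by linarith [h.1]) hdc.le
    rw [integral_add_measure (integrable_smul_dirac u c _ ENNReal.ofReal_ne_top)
        (integrable_smul_dirac u d _ ENNReal.ofReal_ne_top),
      integral_smul_measure, integral_smul_measure, integral_dirac, integral_dirac,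
      ENNReal.toReal_ofReal ha, ENNReal.toReal_ofReal hb]
    simp [smul_eq_mul]
  · exact integral_dirac u x

lemma lintegral_chi {c x d : ℝ} (u : ℝ → ℝ≥0∞) :
    ∫⁻ y, u y ∂(chi c x d) =
      if c < x ∧ x < d then
        ENNReal.ofReal ((d - x)/(d - c)) * u c + ENNReal.ofReal ((x - c)/(d - c)) * u d
      else u x := by
  unfold chi
  split_ifs with h
  · rw [lintegral_add_measure, lintegral_smul_measure, lintegral_smul_measure,
      lintegral_dirac, lintegral_dirac, smul_eq_mul, smul_eq_mul]
  · exact lintegral_dirac x u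

lemma chi_prob {c x d : ℝ} (h1 : c ≤ x) (h2 : x ≤ d) : IsProbabilityMeasure (chi c x d) := by
  constructor
  unfold chi
  split_ifs with h
  · have hdc : (0:ℝ) < d - c := by linarith [h.1, h.2]
    have ha : (0:ℝ) ≤ (d - x)/(d - c) := div_nonneg (by linarith [h.2]) hdc.le
    have hb : (0:ℝ) ≤ (x - c)/(d - c) := div_nonneg (by linarith [h.1]) hdc.le
    simp only [Measure.add_apply, Measure.smul_apply, smul_eq_mul, measure_univ, mul_one]
    rw [← ENNReal.ofReal_add ha hb, ← add_div]
    have : (d - x + (x - c)) / (d - c) = 1 := by field_simp; ring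
    rw [this]; simp
  · simp

lemma chi_mean {c x d : ℝ} (h1 : c ≤ x) (h2 : x ≤ d) : ∫ y, y ∂(chi c x d) = x := by
  rw [integral_chi (fun y => y)]
  split_ifs with h
  · have hdc : (0:ℝ) < d - c := by linarith [h.1, h.2]
    field_simp
    ring
  · rfl

lemma chi_put {c x d : ℝ} (h1 : c ≤ x) (h2 : x ≤ d) (k : ℝ) :
    ENNReal.ofReal (max (k - x) 0) ≤ ∫⁻ y, ENNReal.ofReal (max (k - y) 0) ∂(chi c x d) := by
  rw [lintegral_chi]
  split_ifs with h
  · have hdc : (0:ℝ) < d - c := by linarith [h.1, h.2]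
    set a := (d - x)/(d - c) with ha_def
    set b := (x - c)/(d - c) with hb_def
    have ha : (0:ℝ) ≤ a := div_nonneg (by linarith [h.2]) hdc.le
    have hb : (0:ℝ) ≤ b := div_nonneg (by linarith [h.1]) hdc.le
    have hab : a + b = 1 := by rw [ha_def, hb_def, ← add_div]; field_simp; ring
    have hmean : a * c + b * d = x := by rw [ha_def, hb_def]; field_simp; ring
    rw [← ENNReal.ofReal_mul ha, ← ENNReal.ofReal_mul hb,
      ← ENNReal.ofReal_add (mul_nonneg ha (le_max_right _ _)) (mul_nonneg hb (le_max_right _ _))]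
    apply ENNReal.ofReal_le_ofReal
    have key : a * (k - c) + b * (k - d) = k - x := by linear_combination k * hab - hmean
    calc max (k - x) 0 = max (a * (k - c) + b * (k - d)) 0 := by rw [key]
      _ ≤ a * max (k - c) 0 + b * max (k - d) 0 := by
          rcases le_total (a * (k - c) + b * (k - d)) 0 with h' | h'
          · rw [max_eq_right h']
            have := mul_nonneg ha (le_max_right (k - c) 0)
            have := mul_nonneg hb (le_max_right (k - d) 0)
            linarith
          · rw [max_eq_left h']
            exact add_le_add (mul_le_mul_of_nonneg_left (le_max_left _ _) ha)
              (mul_le_mul_of_nonneg_left (le_max_left _ _) hb)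
  · exact le_rfl

lemma chi_abs {c x d : ℝ} (h1 : c ≤ x) (h2 : x ≤ d) :
    ∫⁻ y, (‖y‖₊ : ℝ≥0∞) ∂(chi c x d) ≤
      ENNReal.ofReal (|x| + 2 * (if c < d then (d - x) * (x - c) / (d - c) else 0)) := by
  have hx1 := le_abs_self x
  have hx2 := neg_abs_le x
  rw [lintegral_chi]
  split_ifs with h h'
  · have hdc : (0:ℝ) < d - c := by linarith [h.1, h.2]
    have ha : (0:ℝ) ≤ (d - x)/(d - c) := div_nonneg (by linarith [h.2]) hdc.le
    have hb : (0:ℝ) ≤ (x - c)/(d - c) := div_nonneg (by linarith [h.1]) hdc.le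
    rw [← enorm_eq_nnnorm, ← enorm_eq_nnnorm, Real.enorm_eq_ofReal_abs, Real.enorm_eq_ofReal_abs,
      ← ENNReal.ofReal_mul ha, ← ENNReal.ofReal_mul hb,
      ← ENNReal.ofReal_add (mul_nonneg ha (abs_nonneg _)) (mul_nonneg hb (abs_nonneg _))]
    apply ENNReal.ofReal_le_ofReal
    have hc : |c| ≤ |x| + (x - c) := by
      rcases abs_cases c with ⟨e, _⟩ | ⟨e, _⟩ <;> rw [e] <;> linarith
    have hd : |d| ≤ |x| + (d - x) := by
      rcases abs_cases d with ⟨e, _⟩ | ⟨e, _⟩ <;> rw [e] <;> linarith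
    have key : (d - x)/(d - c) * (x - c) + (x - c)/(d - c) * (d - x)
        = 2 * ((d - x) * (x - c) / (d - c)) := by field_simp; ring
    have step : (d - x)/(d - c) * |c| + (x - c)/(d - c) * |d|
        ≤ (d - x)/(d - c) * (|x| + (x - c)) + (x - c)/(d - c) * (|x| + (d - x)) :=
      add_le_add (mul_le_mul_of_nonneg_left hc ha) (mul_le_mul_of_nonneg_left hd hb)
    have hab : (d - x)/(d - c) + (x - c)/(d - c) = 1 := by
      rw [← add_div]; field_simp; ring
    calc (d - x)/(d - c) * |c| + (x - c)/(d - c) * |d|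
        ≤ (d - x)/(d - c) * (|x| + (x - c)) + (x - c)/(d - c) * (|x| + (d - x)) := step
      _ = ((d - x)/(d - c) + (x - c)/(d - c)) * |x|
            + ((d - x)/(d - c) * (x - c) + (x - c)/(d - c) * (d - x)) := by ring
      _ = |x| + 2 * ((d - x) * (x - c) / (d - c)) := by rw [hab, key, one_mul]
  · exact absurd (lt_trans h.1 h.2) h'
  · rw [← enorm_eq_nnnorm, Real.enorm_eq_ofReal_abs]
    apply ENNReal.ofReal_le_ofReal
    have := div_nonneg (mul_nonneg (sub_nonneg.2 h2) (sub_nonneg.2 h1))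
      (by linarith : (0:ℝ) ≤ d - c)
    linarith
  · rw [← enorm_eq_nnnorm, Real.enorm_eq_ofReal_abs]
    apply ENNReal.ofReal_le_ofReal
    linarith

lemma measurable_chi_comp {f g : ℝ → ℝ} (hf : Measurable f) (hg : Measurable g) :
    Measurable (fun x => chi (f x) x (g x)) := by
  apply Measure.measurable_of_measurable_coe
  intro s hs
  have heq : (fun x => chi (f x) x (g x) s) = fun x =>
      if f x < x ∧ x < g x then
        ENNReal.ofReal ((g x - x)/(g x - f x)) * s.indicator 1 (f x)
          + ENNReal.ofReal ((x - f x)/(g x - f x)) * s.indicator 1 (g x)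
      else s.indicator 1 x := by
    funext x
    unfold chi
    split_ifs with h
    · simp only [Measure.coe_add, Measure.coe_smul, Pi.add_apply, Pi.smul_apply,
        smul_eq_mul, Measure.dirac_apply' _ hs]
    · exact Measure.dirac_apply' _ hs
  rw [heq]
  have hind : Measurable (s.indicator (1 : ℝ → ℝ≥0∞)) := measurable_one.indicator hs
  refine Measurable.ite ?_ ?_ ?_
  · exact (measurableSet_lt hf measurable_id).inter (measurableSet_lt measurable_id hg)
  · exact ((ENNReal.measurable_ofReal.comp
        (((hg.sub measurable_id).div (hg.sub hf)))).mul (hind.comp hf)).add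
      ((ENNReal.measurable_ofReal.comp
        (((measurable_id.sub hf).div (hg.sub hf)))).mul (hind.comp hg))
  · exact hind

end AuxChi

/-- Construction of a martingale coupling from functions `f ≤ id ≤ g`: the second
marginal `ν = μ bind χ_{f(x),x,g(x)}` is a probability measure with finite first
moment and the same mean, `μ ≤_cx ν`, and `π(dx,dy) = μ(dx) χ_{f(x),x,g(x)}(dy)`
is a martingale coupling of `μ` and `ν`. -/
theorem coupling_from_fg
    (f g : ℝ → ℝ) (hf : Measurable f) (hg : Measurable g)
    (hfg : ∀ x, f x ≤ x ∧ x ≤ g x)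
    (μ : Measure ℝ) [IsProbabilityMeasure μ]
    (hμint : Integrable (fun x => x) μ)
    (hint : Integrable
      (fun x => if f x < g x then (g x - x) * (x - f x) / (g x - f x) else 0) μ) :
    IsProbabilityMeasure (μ.bind (fun x => chi (f x) x (g x))) ∧
    Integrable (fun y => y) (μ.bind (fun x => chi (f x) x (g x))) ∧
    (∫ y, y ∂(μ.bind (fun x => chi (f x) x (g x))) = ∫ x, x ∂μ) ∧
    (∀ k : ℝ, putPrice μ k ≤ putPrice (μ.bind (fun x => chi (f x) x (g x))) k) ∧
    IsMartingaleCoupling μ (μ.bind (fun x => chi (f x) x (g x)))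
      (μ.bind (fun x => Measure.map (fun y => (x, y)) (chi (f x) x (g x)))) := by
  have hle : ∀ x, f x ≤ x := fun x => (hfg x).1
  have hge : ∀ x, x ≤ g x := fun x => (hfg x).2
  have hκmeas : Measurable (fun x => chi (f x) x (g x)) := measurable_chi_comp hf hg
  let K : ProbabilityTheory.Kernel ℝ ℝ := ⟨fun x => chi (f x) x (g x), hκmeas⟩
  have hK : ∀ x, K x = chi (f x) x (g x) := fun _ => rfl
  haveI : ProbabilityTheory.IsMarkovKernel K := ⟨fun x => chi_prob (hle x) (hge x)⟩
  -- ν as second marginal of the compProd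
  have hν : μ.bind (fun x => chi (f x) x (g x)) = (μ ⊗ₘ K).map Prod.snd := by
    ext s hs
    rw [Measure.bind_apply hs hκmeas.aemeasurable, Measure.map_apply measurable_snd hs,
      Measure.compProd_apply (measurable_snd hs)]
    rfl
  -- π equals the compProd
  have hπ : μ.bind (fun x => Measure.map (fun y => (x, y)) (chi (f x) x (g x))) = μ ⊗ₘ K := by
    have hm : Measurable (fun x => Measure.map (fun y => (x, y)) (chi (f x) x (g x))) := by
      apply Measure.measurable_of_measurable_coe
      intro t ht
      have heq : (fun x => Measure.map (fun y => (x, y)) (chi (f x) x (g x)) t)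
          = fun x => K x (Prod.mk x ⁻¹' t) := by
        funext x
        rw [Measure.map_apply measurable_prodMk_left ht]
        rfl
      rw [heq]
      exact ProbabilityTheory.Kernel.measurable_kernel_prodMk_left ht
    ext s hs
    rw [Measure.bind_apply hs hm.aemeasurable, Measure.compProd_apply hs]
    refine lintegral_congr fun x => ?_
    rw [Measure.map_apply measurable_prodMk_left hs]
    rfl
  -- probability measure
  have hprob : IsProbabilityMeasure (μ.bind (fun x => chi (f x) x (g x))) := by
    rw [hν]
    exact Measure.isProbabilityMeasure_map measurable_snd.aemeasurable
  -- integrability of the identity w.r.t. ν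
  have hHnn : ∀ x : ℝ, (0:ℝ) ≤ (if f x < g x then (g x - x) * (x - f x) / (g x - f x) else 0) := by
    intro x
    split_ifs with h'
    · exact div_nonneg (mul_nonneg (by linarith [hge x]) (by linarith [hle x])) (by linarith)
    · exact le_rfl
  have hHmeas : Measurable
      (fun x => if f x < g x then (g x - x) * (x - f x) / (g x - f x) else 0) :=
    Measurable.ite (measurableSet_lt hf hg)
      (((hg.sub measurable_id).mul (measurable_id.sub hf)).div (hg.sub hf)) measurable_const
  have hIν : Integrable (fun y => y) (μ.bind (fun x => chi (f x) x (g x))) := by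
    refine ⟨measurable_id.aestronglyMeasurable, ?_⟩
    have hlt : (∫⁻ y, (‖y‖₊ : ℝ≥0∞) ∂(μ.bind (fun x => chi (f x) x (g x)))) < ∞ := by
      have hnn : Measurable fun y : ℝ => (‖y‖₊ : ℝ≥0∞) :=
        measurable_nnnorm.coe_nnreal_ennreal
      rw [Measure.lintegral_bind hκmeas.aemeasurable hnn.aemeasurable]
      calc ∫⁻ x, ∫⁻ y, (‖y‖₊ : ℝ≥0∞) ∂(chi (f x) x (g x)) ∂μ
          ≤ ∫⁻ x, ENNReal.ofReal (|x| + 2 *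
              (if f x < g x then (g x - x) * (x - f x) / (g x - f x) else 0)) ∂μ :=
            lintegral_mono fun x => chi_abs (hle x) (hge x)
        _ = ∫⁻ x, ((‖x‖₊ : ℝ≥0∞) + 2 *
              (‖if f x < g x then (g x - x) * (x - f x) / (g x - f x) else 0‖₊ : ℝ≥0∞)) ∂μ := by
            refine lintegral_congr fun x => ?_
            rw [ENNReal.ofReal_add (abs_nonneg x) (by linarith [hHnn x]),
              ENNReal.ofReal_mul (by norm_num : (0:ℝ) ≤ 2),
              ← Real.enorm_eq_ofReal_abs, ← Real.enorm_eq_ofReal (hHnn x), enorm_eq_nnnorm, enorm_eq_nnnorm]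
            norm_num
        _ < ∞ := by
            rw [lintegral_add_left hnn, lintegral_const_mul 2 hHmeas.nnnorm.coe_nnreal_ennreal]
            exact ENNReal.add_lt_top.mpr
              ⟨hμint.2, ENNReal.mul_lt_top (by norm_num) hint.2⟩
    exact hlt
  -- integrability of the second coordinate w.r.t. the compProd
  have hIπ : Integrable (fun p : ℝ × ℝ => p.2) (μ ⊗ₘ K) := by
    have h1 : Integrable (fun y => y) ((μ ⊗ₘ K).map Prod.snd) := hν ▸ hIν
    exact (integrable_map_measure measurable_id.aestronglyMeasurable
      measurable_snd.aemeasurable).mp h1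
  -- same mean
  have hmean : ∫ y, y ∂(μ.bind (fun x => chi (f x) x (g x))) = ∫ x, x ∂μ := by
    have hsm : AEStronglyMeasurable (fun y : ℝ => y) ((μ ⊗ₘ K).map Prod.snd) :=
      measurable_id.aestronglyMeasurable
    rw [hν, integral_map measurable_snd.aemeasurable hsm, Measure.integral_compProd hIπ]
    exact integral_congr_ae (ae_of_all _ fun x => chi_mean (hle x) (hge x))
  refine ⟨hprob, hIν, hmean, ?_, ?_⟩
  · -- put prices
    intro k
    haveI := hprob
    have Iμk : Integrable (fun x => max (k - x) 0) μ := ((integrable_const k).sub hμint).pos_part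
    have Iνk : Integrable (fun y => max (k - y) 0) (μ.bind (fun x => chi (f x) x (g x))) :=
      ((integrable_const k).sub hIν).pos_part
    have hnn1 : 0 ≤ᵐ[μ] fun x => max (k - x) 0 := ae_of_all _ fun x => le_max_right _ _
    have hnn2 : 0 ≤ᵐ[μ.bind (fun x => chi (f x) x (g x))] fun y => max (k - y) 0 :=
      ae_of_all _ fun y => le_max_right _ _
    unfold putPrice
    rw [integral_eq_lintegral_of_nonneg_ae hnn1 Iμk.1,
      integral_eq_lintegral_of_nonneg_ae hnn2 Iνk.1]
    apply ENNReal.toReal_mono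
    · have heq : (∫⁻ y, ENNReal.ofReal (max (k - y) 0) ∂(μ.bind (fun x => chi (f x) x (g x))))
          = ∫⁻ y, (‖max (k - y) 0‖₊ : ℝ≥0∞) ∂(μ.bind (fun x => chi (f x) x (g x))) :=
        lintegral_congr fun y => (Real.enorm_eq_ofReal (le_max_right _ _)).symm
      rw [heq]
      exact Iνk.2.ne
    · have hmp : Measurable fun y : ℝ => ENNReal.ofReal (max (k - y) 0) :=
        ENNReal.measurable_ofReal.comp ((measurable_const.sub measurable_id).max
          measurable_const)
      rw [Measure.lintegral_bind hκmeas.aemeasurable hmp.aemeasurable]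
      exact lintegral_mono fun x => chi_put (hle x) (hge x) k
  · -- martingale coupling
    refine ⟨?_, ?_, ?_, ?_⟩
    · rw [hπ]; infer_instance
    · rw [hπ]
      show (μ ⊗ₘ K).fst = μ
      exact Measure.fst_compProd μ K
    · rw [hπ]
      exact hν.symm
    · intro B hB
      rw [hπ, Measure.setIntegral_compProd hB MeasurableSet.univ hIπ.integrableOn]
      simp only [Measure.restrict_univ]
      exact setIntegral_congr_fun hB fun x _ => chi_mean (hle x) (hge x)
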